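/- For each μ > 0 let f_μ : [p₀,0] → ℝ be a twice continuously differentiable function satisfying λ²·(a³f_μ')' = μ·a·f_μ on [p₀,0], f_μ(p₀) = 0 and f_μ'(p₀) = 1. Then W(μ) := (g·λ⁴ + α·μ²)·f_μ(0) − λ⁴·a(0)³·f_μ'(0) tends to +∞ as μ → ∞. -/

import Mathlib

open Real Set Filter
open Topology

/-- Derivative within the interval [p₀, 0]. -/
noncomputable def dI (p₀ : ℝ) (f : ℝ → ℝ) : ℝ → ℝ :=
  derivWithin f (Set.Icc p₀ 0)

lemma wronskian_aux (p₀ lam : ℝ) (hp₀ : p₀ < 0) (hlam : 0 < lam)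
    (a : ℝ → ℝ) (ha : ContDiffOn ℝ 1 a (Icc p₀ 0))
    (hapos : ∀ p ∈ Icc p₀ 0, 0 < a p)
    (A : ℝ) (hA : ∀ p ∈ Icc p₀ 0, a p ≤ A)
    (μ : ℝ) (hμ : 0 < μ) (F : ℝ → ℝ)
    (hF : ContDiffOn ℝ 2 F (Icc p₀ 0))
    (hFe : ∀ p ∈ Icc p₀ 0, lam ^ 2 * dI p₀ (fun q => a q ^ 3 * dI p₀ F q) p = μ * a p * F p)
    (hF0 : F p₀ = 0) (hF'0 : dI p₀ F p₀ = 1) :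
    a p₀ ^ 3 / A ^ 3 * (-p₀) ≤ F 0 ∧ 0 ≤ F 0 ∧
    a 0 ^ 3 * dI p₀ F 0 ≤ a p₀ ^ 3 + μ / lam ^ 2 * A * F 0 * (-p₀) := by
  have hI : UniqueDiffOn ℝ (Icc p₀ 0) := uniqueDiffOn_Icc hp₀
  have hp0m : p₀ ∈ Icc p₀ 0 := left_mem_Icc.mpr hp₀.le
  have h0m : (0:ℝ) ∈ Icc p₀ 0 := right_mem_Icc.mpr hp₀.le
  have hApos : 0 < A := lt_of_lt_of_le (hapos p₀ hp0m) (hA p₀ hp0m)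
  set g1 : ℝ → ℝ := dI p₀ F with hg1def
  set G : ℝ → ℝ := fun q => a q ^ 3 * g1 q with hGdef
  have hg1C : ContDiffOn ℝ 1 g1 (Icc p₀ 0) := hF.derivWithin hI (by norm_num)
  have hGC : ContDiffOn ℝ 1 G (Icc p₀ 0) := (ha.pow 3).mul hg1C
  have hFc : ContinuousOn F (Icc p₀ 0) := hF.continuousOn
  have hg1c : ContinuousOn g1 (Icc p₀ 0) := hg1C.continuousOn
  have hFd : DifferentiableOn ℝ F (interior (Icc p₀ 0)) :=
    (hF.differentiableOn (by norm_num)).mono interior_subset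
  have hGd : DifferentiableOn ℝ G (interior (Icc p₀ 0)) :=
    (hGC.differentiableOn (by norm_num)).mono interior_subset
  have hio : interior (Icc p₀ (0:ℝ)) = Ioo p₀ 0 := interior_Icc
  have hnb : ∀ x ∈ Ioo p₀ (0:ℝ), Icc p₀ 0 ∈ 𝓝 x := fun x hx => Icc_mem_nhds hx.1 hx.2
  have hderivF : ∀ x ∈ Ioo p₀ (0:ℝ), deriv F x = g1 x := fun x hx =>
    (derivWithin_of_mem_nhds (hnb x hx)).symm
  have hderivG : ∀ x ∈ Ioo p₀ (0:ℝ), deriv G x = μ * a x * F x / lam ^ 2 := by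
    intro x hx
    have h1 := hFe x (Ioo_subset_Icc_self hx)
    have h2 : derivWithin G (Icc p₀ 0) x = deriv G x := derivWithin_of_mem_nhds (hnb x hx)
    have hlam2 : (0:ℝ) < lam ^ 2 := by positivity
    have : lam ^ 2 * derivWithin G (Icc p₀ 0) x = μ * a x * F x := h1
    rw [h2] at this
    field_simp
    linarith [this]
  have hGp₀ : G p₀ = a p₀ ^ 3 := by
    show a p₀ ^ 3 * g1 p₀ = a p₀ ^ 3
    rw [hF'0, mul_one]
  -- main subclaim
  have main : ∀ T ∈ Icc p₀ (0:ℝ), (∀ p ∈ Ico p₀ T, 0 < g1 p) → a p₀ ^ 3 ≤ G T := by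
    intro T hT hpos
    rcases eq_or_lt_of_le hT.1 with hTeq | hTlt
    · rw [← hTeq, hGp₀]
    have hsub : Icc p₀ T ⊆ Icc p₀ 0 := Icc_subset_Icc_right hT.2
    have hioT : interior (Icc p₀ T) = Ioo p₀ T := interior_Icc
    have hioTsub : Ioo p₀ T ⊆ Ioo p₀ 0 := Ioo_subset_Ioo_right hT.2
    have hintsub : interior (Icc p₀ T) ⊆ interior (Icc p₀ 0) := by
      rw [hioT, hio]; exact hioTsub
    have Fmono : MonotoneOn F (Icc p₀ T) := by
      apply monotoneOn_of_deriv_nonneg (convex_Icc _ _) (hFc.mono hsub) (hFd.mono hintsub)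
      intro x hx
      rw [hioT] at hx
      rw [hderivF x (hioTsub hx)]
      exact (hpos x ⟨hx.1.le, hx.2⟩).le
    have hFnn : ∀ p ∈ Icc p₀ T, 0 ≤ F p := by
      intro p hp
      have := Fmono (left_mem_Icc.mpr hT.1) hp hp.1
      rwa [hF0] at this
    have Gmono : MonotoneOn G (Icc p₀ T) := by
      apply monotoneOn_of_deriv_nonneg (convex_Icc _ _) (hGC.continuousOn.mono hsub)
        (hGd.mono hintsub)
      intro x hx
      rw [hioT] at hx
      rw [hderivG x (hioTsub hx)]
      have hax := hapos x (hsub (Ioo_subset_Icc_self hx))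
      have hFx := hFnn x (Ioo_subset_Icc_self hx)
      positivity
    have := Gmono (left_mem_Icc.mpr hT.1) (right_mem_Icc.mpr hT.1) hT.1
    rwa [hGp₀] at this
  -- positivity of g1
  have hg1pos : ∀ p ∈ Icc p₀ (0:ℝ), 0 < g1 p := by
    by_contra hcon
    push_neg at hcon
    obtain ⟨p, hp, hple⟩ := hcon
    set S : Set ℝ := Icc p₀ 0 ∩ g1 ⁻¹' (Iic 0) with hSdef
    have hSne : S.Nonempty := ⟨p, hp, by simpa using hple⟩
    have hSclosed : IsClosed S := hg1c.preimage_isClosed_of_isClosed isClosed_Icc isClosed_Iic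
    have hSbdd : BddBelow S := ⟨p₀, fun q hq => hq.1.1⟩
    set T := sInf S with hTdef
    have hTS : T ∈ S := hSclosed.csInf_mem hSne hSbdd
    have hpre : ∀ q ∈ Ico p₀ T, 0 < g1 q := by
      intro q hq
      by_contra hc
      push_neg at hc
      have hqS : q ∈ S := ⟨⟨hq.1, hq.2.le.trans hTS.1.2⟩, by simpa using hc⟩
      exact absurd (csInf_le hSbdd hqS) (not_le.mpr hq.2)
    have h1 : a p₀ ^ 3 ≤ a T ^ 3 * g1 T := main T hTS.1 hpre
    have hT3 : (0:ℝ) < a T ^ 3 := pow_pos (hapos T hTS.1) 3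
    have hp3 : (0:ℝ) < a p₀ ^ 3 := pow_pos (hapos p₀ hp0m) 3
    have hg1T : g1 T ≤ 0 := hTS.2
    nlinarith [mul_nonpos_of_nonneg_of_nonpos hT3.le hg1T]

  -- consequences
  have hGge : ∀ p ∈ Icc p₀ (0:ℝ), a p₀ ^ 3 ≤ G p := fun p hp =>
    main p hp (fun q hq => hg1pos q ⟨hq.1, hq.2.le.trans hp.2⟩)
  have hg1ge : ∀ p ∈ Icc p₀ (0:ℝ), a p₀ ^ 3 / A ^ 3 ≤ g1 p := by
    intro p hp
    have h1 := hGge p hp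
    have h2 := hg1pos p hp
    have h3 : a p ^ 3 ≤ A ^ 3 := pow_le_pow_left₀ (hapos p hp).le (hA p hp) 3
    have hA3 : (0:ℝ) < A ^ 3 := by positivity
    rw [div_le_iff₀ hA3]
    have h1' : a p₀ ^ 3 ≤ a p ^ 3 * g1 p := h1
    nlinarith [mul_le_mul_of_nonneg_right h3 h2.le]
  have Fmono : MonotoneOn F (Icc p₀ 0) := by
    apply monotoneOn_of_deriv_nonneg (convex_Icc _ _) hFc hFd
    intro x hx
    rw [hio] at hx
    rw [hderivF x hx]
    exact (hg1pos x (Ioo_subset_Icc_self hx)).le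
  have hFnn : ∀ p ∈ Icc p₀ (0:ℝ), 0 ≤ F p := by
    intro p hp
    have := Fmono hp0m hp hp.1
    rwa [hF0] at this
  have hFle : ∀ p ∈ Icc p₀ (0:ℝ), F p ≤ F 0 := fun p hp => Fmono hp h0m hp.2
  refine ⟨?_, hFnn 0 h0m, ?_⟩
  · have := (convex_Icc p₀ 0).mul_sub_le_image_sub_of_le_deriv hFc hFd
      (C := a p₀ ^ 3 / A ^ 3) ?_ p₀ hp0m 0 h0m hp₀.le
    · rw [hF0] at this; linarith
    · intro x hx
      rw [hio] at hx
      rw [hderivF x hx]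
      exact hg1ge x (Ioo_subset_Icc_self hx)
  · have hbd := (convex_Icc p₀ 0).image_sub_le_mul_sub_of_deriv_le hGC.continuousOn hGd
      (C := μ / lam ^ 2 * A * F 0) ?_ p₀ hp0m 0 h0m hp₀.le
    · rw [hGp₀] at hbd
      have hg0 : G 0 = a 0 ^ 3 * g1 0 := rfl
      rw [hg0] at hbd
      show a 0 ^ 3 * g1 0 ≤ _
      linarith
    · intro x hx
      rw [hio] at hx
      rw [hderivG x hx]
      have hxm := Ioo_subset_Icc_self hx
      have h1 := hapos x hxm
      have h2 := hA x hxm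
      have h3 := hFnn x hxm
      have h4 := hFle x hxm
      have hlam2 : (0:ℝ) < lam ^ 2 := by positivity
      have hAnn : (0:ℝ) ≤ A := ((hapos x hxm).le.trans h2)
      have hprod : a x * F x ≤ A * F 0 := mul_le_mul h2 h4 h3 hAnn
      have hle : μ * a x * F x ≤ μ * A * F 0 := by nlinarith
      rw [div_le_iff₀ hlam2]
      have hkey : μ / lam ^ 2 * A * F 0 * lam ^ 2 = μ * A * F 0 := by field_simp
      linarith

/-- For each μ > 0 let f_μ solve λ²·(a³f_μ')' = μ·a·f_μ on [p₀,0] with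
f_μ(p₀) = 0 and f_μ'(p₀) = 1. Then
W(μ) = (g·λ⁴ + α·μ²)·f_μ(0) − λ⁴·a(0)³·f_μ'(0) → ∞ as μ → ∞. -/
theorem wronskian_tendsto_atTop
    (p₀ lam α g : ℝ) (hp₀ : p₀ < 0) (hlam : 0 < lam) (hα : 0 < α) (hg : 0 < g)
    (a : ℝ → ℝ) (ha : ContDiffOn ℝ 1 a (Icc p₀ 0))
    (hapos : ∀ p ∈ Icc p₀ 0, 0 < a p)
    (f : ℝ → ℝ → ℝ)
    (hf : ∀ μ : ℝ, 0 < μ → ContDiffOn ℝ 2 (f μ) (Icc p₀ 0))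
    (hfe : ∀ μ : ℝ, 0 < μ → ∀ p ∈ Icc p₀ 0,
      lam ^ 2 * dI p₀ (fun q => a q ^ 3 * dI p₀ (f μ) q) p = μ * a p * f μ p)
    (hf0 : ∀ μ : ℝ, 0 < μ → f μ p₀ = 0)
    (hf'0 : ∀ μ : ℝ, 0 < μ → dI p₀ (f μ) p₀ = 1) :
    Tendsto (fun μ : ℝ =>
        (g * lam ^ 4 + α * μ ^ 2) * f μ 0 - lam ^ 4 * a 0 ^ 3 * dI p₀ (f μ) 0)
      atTop atTop := by
  obtain ⟨PA, hPAm, hPA⟩ :=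
    isCompact_Icc.exists_isMaxOn (nonempty_Icc.mpr hp₀.le) ha.continuousOn
  set A := a PA with hAdef
  have hAub : ∀ p ∈ Icc p₀ 0, a p ≤ A := fun p hp => hPA hp
  have hp0m : p₀ ∈ Icc p₀ 0 := left_mem_Icc.mpr hp₀.le
  have hApos : 0 < A := lt_of_lt_of_le (hapos p₀ hp0m) (hAub p₀ hp0m)
  have hap₀ : 0 < a p₀ := hapos p₀ hp0m
  have hnegp₀ : 0 < -p₀ := neg_pos.mpr hp₀
  set c : ℝ := a p₀ ^ 3 / A ^ 3 * (-p₀) with hcdef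
  have hcpos : 0 < c := by positivity
  have hlow : Tendsto (fun μ : ℝ => c * (α / 2) * μ ^ 2 - lam ^ 4 * a p₀ ^ 3)
      atTop atTop := by
    apply tendsto_atTop_add_const_right
    exact Tendsto.const_mul_atTop (by positivity) (tendsto_pow_atTop two_ne_zero)
  refine tendsto_atTop_mono' atTop ?_ hlow
  filter_upwards [eventually_ge_atTop (max 1 (2 * lam ^ 2 * A * (-p₀) / α))] with μ hμ
  have hμ1 : (1:ℝ) ≤ μ := le_trans (le_max_left _ _) hμ
  have hμpos : 0 < μ := lt_of_lt_of_le one_pos hμ1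
  have hμ2 : 2 * lam ^ 2 * A * (-p₀) ≤ α * μ := by
    have := le_trans (le_max_right _ _) hμ
    rw [div_le_iff₀ hα] at this
    linarith
  obtain ⟨hl, hFnn, hup⟩ := wronskian_aux p₀ lam hp₀ hlam a ha hapos A hAub μ hμpos
    (f μ) (hf μ hμpos) (hfe μ hμpos) (hf0 μ hμpos) (hf'0 μ hμpos)
  set F0 := f μ 0
  have hlamne : lam ≠ 0 := ne_of_gt hlam
  have hup4 : lam ^ 4 * (a 0 ^ 3 * dI p₀ (f μ) 0) ≤
      lam ^ 4 * a p₀ ^ 3 + lam ^ 2 * μ * A * F0 * (-p₀) := by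
    have h1 := mul_le_mul_of_nonneg_left hup (le_of_lt (by positivity : (0:ℝ) < lam ^ 4))
    have hid : lam ^ 4 * (a p₀ ^ 3 + μ / lam ^ 2 * A * F0 * (-p₀)) =
        lam ^ 4 * a p₀ ^ 3 + lam ^ 2 * μ * A * F0 * (-p₀) := by
      field_simp
    linarith
  have e1 : lam ^ 2 * μ * A * (-p₀) ≤ α / 2 * μ ^ 2 := by nlinarith
  have t1 : lam ^ 2 * μ * A * F0 * (-p₀) ≤ α / 2 * μ ^ 2 * F0 := by nlinarith
  have t2 : (g * lam ^ 4 + α / 2 * μ ^ 2) * c ≤ (g * lam ^ 4 + α / 2 * μ ^ 2) * F0 :=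
    mul_le_mul_of_nonneg_left hl (by positivity)
  have hc0 : 0 ≤ g * lam ^ 4 * c := by positivity
  have hgoal : c * (α / 2) * μ ^ 2 - lam ^ 4 * a p₀ ^ 3 ≤
      (g * lam ^ 4 + α * μ ^ 2) * F0 - lam ^ 4 * (a 0 ^ 3 * dI p₀ (f μ) 0) := by
    nlinarith
  calc c * (α / 2) * μ ^ 2 - lam ^ 4 * a p₀ ^ 3
      ≤ (g * lam ^ 4 + α * μ ^ 2) * F0 - lam ^ 4 * (a 0 ^ 3 * dI p₀ (f μ) 0) := hgoal
    _ = (g * lam ^ 4 + α * μ ^ 2) * f μ 0 - lam ^ 4 * a 0 ^ 3 * dI p₀ (f μ) 0 := by ring
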